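/- Let H and M be symmetric positive semidefinite matrices sharing the same kernel with μM ⪯ H for some μ > 0. Then for any vector g, the function λ ↦ ‖(H + λM)† g‖_M is monotonically nonincreasing on λ ≥ 0, where † denotes the Moore–Penrose pseudoinverse. -/

import Mathlib

open Matrix

/-- The four Moore–Penrose conditions characterizing the pseudoinverse. -/
def IsMoorePenrose {d : ℕ} (A B : Matrix (Fin d) (Fin d) ℝ) : Prop :=
  A * B * A = A ∧ B * A * B = B ∧ (A * B)ᵀ = A * B ∧ (B * A)ᵀ = B * A

lemma mp_unique {d : ℕ} {A B C : Matrix (Fin d) (Fin d) ℝ}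
    (hB : IsMoorePenrose A B) (hC : IsMoorePenrose A C) : B = C := by
  obtain ⟨hB1, hB2, hB3, hB4⟩ := hB
  obtain ⟨hC1, hC2, hC3, hC4⟩ := hC
  have hAt : Aᵀ = Aᵀ * (A * C) := by
    conv_lhs => rw [← hC1]
    rw [transpose_mul (A * C) A, hC3]
  have hAt2 : Aᵀ = (C * A) * Aᵀ := by
    conv_lhs => rw [← hC1]
    rw [mul_assoc A C A, transpose_mul A (C * A), hC4]
  have hAB : A * B = A * C := by
    calc A * B = (A * B)ᵀ := hB3.symm
    _ = Bᵀ * Aᵀ := transpose_mul A B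
    _ = Bᵀ * (Aᵀ * (A * C)) := by rw [← hAt]
    _ = (Bᵀ * Aᵀ) * (A * C) := (mul_assoc _ _ _).symm
    _ = (A * B)ᵀ * (A * C) := by rw [← transpose_mul A B]
    _ = (A * B) * (A * C) := by rw [hB3]
    _ = (A * B * A) * C := by simp only [mul_assoc]
    _ = A * C := by rw [hB1]
  have hBA : B * A = C * A := by
    calc B * A = (B * A)ᵀ := hB4.symm
    _ = Aᵀ * Bᵀ := transpose_mul B A
    _ = ((C * A) * Aᵀ) * Bᵀ := by rw [← hAt2]
    _ = (C * A) * (Aᵀ * Bᵀ) := mul_assoc _ _ _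
    _ = (C * A) * (B * A)ᵀ := by rw [← transpose_mul B A]
    _ = (C * A) * (B * A) := by rw [hB4]
    _ = C * (A * B * A) := by simp only [mul_assoc]
    _ = C * A := by rw [hB1]
  calc B = B * A * B := hB2.symm
  _ = (C * A) * B := by rw [hBA]
  _ = C * (A * B) := by rw [mul_assoc]
  _ = C * (A * C) := by rw [hAB]
  _ = C * A * C := by rw [mul_assoc]
  _ = C := hC2

lemma mat_ext_of_mulVec {d : ℕ} {A B : Matrix (Fin d) (Fin d) ℝ}
    (h : ∀ x, A *ᵥ x = B *ᵥ x) : A = B := by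
  ext i j
  have := congrFun (h (Pi.single j 1)) i
  simpa using this

lemma dot_sym {d : ℕ} {A : Matrix (Fin d) (Fin d) ℝ} (hA : Aᵀ = A) (x y : Fin d → ℝ) :
    x ⬝ᵥ A *ᵥ y = y ⬝ᵥ A *ᵥ x := by
  rw [dotProduct_mulVec, ← mulVec_transpose, hA, dotProduct_comm]

/-- `λ ↦ ‖(H + λM)† g‖_M` is nonincreasing on `λ ≥ 0`. -/
theorem stmt9 {d : ℕ} (H M : Matrix (Fin d) (Fin d) ℝ)
    (hH : H.PosSemidef) (hM : M.PosSemidef)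
    (hker : ∀ x, M.mulVec x = 0 ↔ H.mulVec x = 0)
    (μ : ℝ) (hμ : 0 < μ) (hdom : (H - μ • M).PosSemidef)
    (g : Fin d → ℝ) :
    ∀ l1 l2 : ℝ, 0 ≤ l1 → l1 ≤ l2 →
      ∀ P1 P2 : Matrix (Fin d) (Fin d) ℝ,
        IsMoorePenrose (H + l1 • M) P1 → IsMoorePenrose (H + l2 • M) P2 →
        Real.sqrt (P2.mulVec g ⬝ᵥ M.mulVec (P2.mulVec g))
          ≤ Real.sqrt (P1.mulVec g ⬝ᵥ M.mulVec (P1.mulVec g)) := by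
  intro l1 l2 hl1 hl12 P1 P2 hP1 hP2
  have hl2 : 0 ≤ l2 := hl1.trans hl12
  have Hsym : Hᵀ = H := by
    rw [← conjTranspose_eq_transpose_of_trivial]; exact hH.1
  have Msym : Mᵀ = M := by
    rw [← conjTranspose_eq_transpose_of_trivial]; exact hM.1
  have qH : ∀ x, 0 ≤ x ⬝ᵥ H *ᵥ x := fun x => by simpa using hH.dotProduct_mulVec_nonneg x
  have qM : ∀ x, 0 ≤ x ⬝ᵥ M *ᵥ x := fun x => by simpa using hM.dotProduct_mulVec_nonneg x
  -- kernel lemma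
  have kerlem : ∀ l : ℝ, 0 ≤ l → ∀ x, (H + l • M) *ᵥ x = 0 ↔ M *ᵥ x = 0 := by
    intro l hl x
    constructor
    · intro hx
      have h0 : x ⬝ᵥ H *ᵥ x + l * (x ⬝ᵥ M *ᵥ x) = 0 := by
        have := congrArg (fun v => x ⬝ᵥ v) hx
        simpa [add_mulVec, smul_mulVec, dotProduct_add, dotProduct_smul,
          smul_eq_mul] using this
      have hHx0 : x ⬝ᵥ H *ᵥ x = 0 := by
        have := mul_nonneg hl (qM x)
        nlinarith [qH x]
      have hH0 : H *ᵥ x = 0 := by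
        have := (hH.dotProduct_mulVec_zero_iff x).mp (by simpa using hHx0)
        exact this
      exact (hker x).mpr hH0
    · intro hx
      have hH0 : H *ᵥ x = 0 := (hker x).mp hx
      simp [add_mulVec, smul_mulVec, hH0, hx]
  set A1 := H + l1 • M with hA1def
  set A2 := H + l2 • M with hA2def
  have A1sym : A1ᵀ = A1 := by
    rw [hA1def, transpose_add, transpose_smul, Hsym, Msym]
  have A2sym : A2ᵀ = A2 := by
    rw [hA2def, transpose_add, transpose_smul, Hsym, Msym]
  have qA1 : ∀ x, 0 ≤ x ⬝ᵥ A1 *ᵥ x := by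
    intro x
    have : x ⬝ᵥ A1 *ᵥ x = x ⬝ᵥ H *ᵥ x + l1 * (x ⬝ᵥ M *ᵥ x) := by
      simp [hA1def, add_mulVec, smul_mulVec, dotProduct_add, dotProduct_smul,
        smul_eq_mul]
    rw [this]
    exact add_nonneg (qH x) (mul_nonneg hl1 (qM x))
  -- key identity A * (A * P) = A
  have idem : ∀ (A P : Matrix (Fin d) (Fin d) ℝ), IsMoorePenrose A P →
      (A * P) * (A * P) = A * P := by
    intro A P hP
    calc (A * P) * (A * P) = A * (P * A * P) := by
          rw [mul_assoc, ← mul_assoc P A P]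
    _ = A * P := by rw [hP.2.1]
  have selfmul : ∀ (A P : Matrix (Fin d) (Fin d) ℝ), Aᵀ = A → IsMoorePenrose A P →
      A * (A * P) = A := by
    intro A P hAs hP
    have h := congrArg transpose hP.1
    rw [transpose_mul, hAs, hP.2.2.1] at h
    exact h
  -- pointwise projection facts
  have proj : ∀ (A B P : Matrix (Fin d) (Fin d) ℝ), Aᵀ = A → IsMoorePenrose A P →
      (∀ x, A *ᵥ x = 0 → B *ᵥ x = 0) →
      ∀ x, B *ᵥ ((A * P) *ᵥ x) = B *ᵥ x := by
    intro A B P hAs hP hAB x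
    have hPy : (A * P) *ᵥ (x - (A * P) *ᵥ x) = 0 := by
      rw [mulVec_sub, mulVec_mulVec, idem A P hP, sub_self]
    have hAy : A *ᵥ (x - (A * P) *ᵥ x) = 0 := by
      have h2 : A *ᵥ (x - (A * P) *ᵥ x) = (A * (A * P)) *ᵥ (x - (A * P) *ᵥ x) := by
        rw [selfmul A P hAs hP]
      rw [h2, ← mulVec_mulVec, hPy, mulVec_zero]
    have hBy : B *ᵥ (x - (A * P) *ᵥ x) = 0 := hAB _ hAy
    rw [mulVec_sub] at hBy
    exact (sub_eq_zero.mp hBy).symm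
  have ker12 : ∀ x, A1 *ᵥ x = 0 → A2 *ᵥ x = 0 := by
    intro x hx
    exact (kerlem l2 hl2 x).mpr ((kerlem l1 hl1 x).mp hx)
  have ker21 : ∀ x, A2 *ᵥ x = 0 → A1 *ᵥ x = 0 := by
    intro x hx
    exact (kerlem l1 hl1 x).mpr ((kerlem l2 hl2 x).mp hx)
  -- matrix level projections
  have hC1 : A2 * (A1 * P1) = A2 :=
    mat_ext_of_mulVec (fun x => by
      rw [← mulVec_mulVec]; exact proj A1 A2 P1 A1sym hP1 ker12 x)
  have hC2 : A1 * (A2 * P2) = A1 :=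
    mat_ext_of_mulVec (fun x => by
      rw [← mulVec_mulVec]; exact proj A2 A1 P2 A2sym hP2 ker21 x)
  -- transpose to get left versions
  have hL1 : (A1 * P1) * A2 = A2 := by
    have := congrArg transpose hC1
    rwa [transpose_mul, A2sym, hP1.2.2.1] at this
  have hL2 : (A2 * P2) * A1 = A1 := by
    have := congrArg transpose hC2
    rwa [transpose_mul, A1sym, hP2.2.2.1] at this
  -- Π1 = Π2
  have hProj12 : (A1 * P1) * (A2 * P2) = A2 * P2 := by
    rw [← mul_assoc, hL1]
  have hProj21 : (A2 * P2) * (A1 * P1) = A1 * P1 := by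
    rw [← mul_assoc, hL2]
  have hProjeq : A1 * P1 = A2 * P2 := by
    have h := congrArg transpose hProj21
    rw [transpose_mul, hP1.2.2.1, hP2.2.2.1] at h
    rw [← h, hProj12]
  -- same projected vector
  set x1 := P1 *ᵥ g with hx1
  set x2 := P2 *ᵥ g with hx2
  have hgg : A1 *ᵥ x1 = A2 *ᵥ x2 := by
    rw [hx1, hx2, mulVec_mulVec, mulVec_mulVec, hProjeq]
  rcases eq_or_lt_of_le hl12 with heq | hlt
  · subst heq
    have : P1 = P2 := mp_unique hP1 hP2
    rw [hx2, hx1, this]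
  · set δ := l2 - l1 with hδ
    have hδpos : 0 < δ := sub_pos.mpr hlt
    set y := x1 - x2 with hy
    have hA1y : A1 *ᵥ y = δ • (M *ᵥ x2) := by
      have hA2A1 : A2 *ᵥ x2 = A1 *ᵥ x2 + δ • (M *ᵥ x2) := by
        rw [hA2def, hA1def, add_mulVec, add_mulVec, smul_mulVec, smul_mulVec]
        rw [hδ, sub_smul]
        abel
      rw [hy, mulVec_sub, hgg, hA2A1]
      abel
    have hMx2 : M *ᵥ x2 = δ⁻¹ • (A1 *ᵥ y) := by
      rw [hA1y, smul_smul, inv_mul_cancel₀ hδpos.ne', one_smul]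
    have hcross : 0 ≤ y ⬝ᵥ M *ᵥ x2 := by
      rw [hMx2, dotProduct_smul, smul_eq_mul]
      exact mul_nonneg (inv_nonneg.mpr hδpos.le) (qA1 y)
    have hexp : x1 ⬝ᵥ M *ᵥ x1
        = y ⬝ᵥ M *ᵥ y + 2 * (y ⬝ᵥ M *ᵥ x2) + x2 ⬝ᵥ M *ᵥ x2 := by
      have hx1y : x1 = y + x2 := by rw [hy]; abel
      have hsym : x2 ⬝ᵥ M *ᵥ y = y ⬝ᵥ M *ᵥ x2 := dot_sym Msym x2 y
      rw [hx1y, mulVec_add, dotProduct_add, add_dotProduct, add_dotProduct]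
      linear_combination hsym
    have hle : x2 ⬝ᵥ M *ᵥ x2 ≤ x1 ⬝ᵥ M *ᵥ x1 := by
      rw [hexp]
      nlinarith [qM y, hcross]
    exact Real.sqrt_le_sqrt hle
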